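/- arXiv:2209.12876 — 2 statements merged into one kernel-verified Lean document; each statement's English description precedes it below -/
import Mathlib

section
/- For any bi-infinite sequence (a_i) ∈ {1,2,3}^ℤ with a_0 = 3, a_1 = 1, a_2 = 2, one has λ₀((a_i)) = [3; a_{−1}, a_{−2}, …] + [0; 1, 2, a_3, a_4, …] > 3.957. -/
/-- Continued fraction numerators: `(cfP a n).1 = pₙ`, `(cfP a n).2 = pₙ₋₁`,
with `p₋₁ = 1`, `p₀ = a₀`, `pₙ₊₁ = aₙ₊₁ pₙ + pₙ₋₁`. -/
noncomputable def cfP (a : ℕ → ℝ) : ℕ → ℝ × ℝ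
  | 0 => (a 0, 1)
  | n + 1 => (a (n + 1) * (cfP a n).1 + (cfP a n).2, (cfP a n).1)

/-- Continued fraction denominators: `(cfQ a n).1 = qₙ`, `(cfQ a n).2 = qₙ₋₁`,
with `q₋₁ = 0`, `q₀ = 1`, `qₙ₊₁ = aₙ₊₁ qₙ + qₙ₋₁`. -/
noncomputable def cfQ (a : ℕ → ℝ) : ℕ → ℝ × ℝ
  | 0 => (1, 0)
  | n + 1 => (a (n + 1) * (cfQ a n).1 + (cfQ a n).2, (cfQ a n).1)

/-- The `n`-th convergent `[a₀; a₁, …, aₙ] = pₙ/qₙ` of the continued fraction with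
partial quotients `a`. -/
noncomputable def cfConv (a : ℕ → ℝ) (n : ℕ) : ℝ := (cfP a n).1 / (cfQ a n).1

/-- `x` is the value of the infinite continued fraction `[a₀; a₁, a₂, …]`, i.e. the limit
of its convergents. -/
def IsCFVal (a : ℕ → ℝ) (x : ℝ) : Prop :=
  Filter.Tendsto (cfConv a) Filter.atTop (nhds x)

/-- shift of a digit sequence -/
noncomputable def cfShift (b : ℕ → ℝ) : ℕ → ℝ := fun i => b (i + 1)

lemma cfPQ_shift (b : ℕ → ℝ) : ∀ n,
    cfP b (n + 1) = (b 0 * (cfP (cfShift b) n).1 + (cfQ (cfShift b) n).1,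
                     b 0 * (cfP (cfShift b) n).2 + (cfQ (cfShift b) n).2) ∧
    cfQ b (n + 1) = ((cfP (cfShift b) n).1, (cfP (cfShift b) n).2) := by
  intro n
  induction n with
  | zero =>
    simp only [cfP, cfQ, cfShift, Prod.ext_iff]
    refine ⟨⟨by ring, by ring⟩, by ring, by trivial⟩
  | succ n ih =>
    simp only [cfP, cfQ, cfShift, Prod.ext_iff] at ih ⊢
    obtain ⟨⟨i1, i2⟩, i3, i4⟩ := ih
    refine ⟨⟨?_, ?_⟩, ?_, ?_⟩
    · linear_combination b (n + 1 + 1) * i1 + i2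
    · linear_combination i1
    · linear_combination b (n + 1 + 1) * i3 + i4
    · linear_combination i3

lemma cfPQ_pos (b : ℕ → ℝ) (hb : ∀ i, 1 ≤ b i) : ∀ n,
    1 ≤ (cfP b n).1 ∧ 0 ≤ (cfP b n).2 ∧ 1 ≤ (cfQ b n).1 ∧ 0 ≤ (cfQ b n).2 := by
  intro n
  induction n with
  | zero => simp only [cfP, cfQ]; exact ⟨hb 0, by norm_num, by norm_num, by norm_num⟩
  | succ n ih =>
    obtain ⟨h1, h2, h3, h4⟩ := ih
    have h5 := hb (n + 1)
    simp only [cfP, cfQ]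
    refine ⟨by nlinarith, by linarith, by nlinarith, by linarith⟩

lemma cfConv_succ (b : ℕ → ℝ) (hb : ∀ i, 1 ≤ b (i + 1)) (n : ℕ) :
    cfConv b (n + 1) = b 0 + 1 / cfConv (cfShift b) n := by
  have h := cfPQ_shift b n
  have hpos := cfPQ_pos (cfShift b) (fun i => hb i) n
  have hP : (0 : ℝ) < (cfP (cfShift b) n).1 := by linarith [hpos.1]
  have hQ : (0 : ℝ) < (cfQ (cfShift b) n).1 := by linarith [hpos.2.2.1]
  rw [cfConv, cfConv, h.1, h.2]
  field_simp

lemma cfConv_bounds0 : ∀ n, ∀ b : ℕ → ℝ, (∀ i, 1 ≤ b i ∧ b i ≤ 3) →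
    1 ≤ cfConv b n ∧ cfConv b n ≤ 4 := by
  intro n
  induction n with
  | zero =>
    intro b hb
    simp only [cfConv, cfP, cfQ, div_one]
    exact ⟨(hb 0).1, le_trans (hb 0).2 (by norm_num)⟩
  | succ n ih =>
    intro b hb
    rw [cfConv_succ b (fun i => (hb (i + 1)).1)]
    obtain ⟨hl, hh⟩ := ih (cfShift b) (fun i => hb (i + 1))
    have hc : 0 < cfConv (cfShift b) n := by linarith
    have h14 : (1 : ℝ) / 4 ≤ 1 / cfConv (cfShift b) n := by
      have := one_div_le_one_div_of_le hc hh
      linarith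
    have h11 : 1 / cfConv (cfShift b) n ≤ 1 := by
      have := one_div_le_one_div_of_le (by norm_num : (0:ℝ) < 1) hl
      simpa using this
    exact ⟨by linarith [(hb 0).1], by linarith [(hb 0).2]⟩

lemma cfConv_bounds_step (k : ℕ) (lo hi lo' hi' : ℝ) (hlo : 0 < lo) (hhi : 0 < hi)
    (e1 : lo' ≤ 1 + 1 / hi) (e2 : 3 + 1 / lo ≤ hi')
    (H : ∀ n, k ≤ n → ∀ b : ℕ → ℝ, (∀ i, 1 ≤ b i ∧ b i ≤ 3) →
      lo ≤ cfConv b n ∧ cfConv b n ≤ hi) :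
    ∀ n, k + 1 ≤ n → ∀ b : ℕ → ℝ, (∀ i, 1 ≤ b i ∧ b i ≤ 3) →
      lo' ≤ cfConv b n ∧ cfConv b n ≤ hi' := by
  intro n hn b hb
  obtain ⟨m, rfl⟩ : ∃ m, n = m + 1 := ⟨n - 1, by omega⟩
  rw [cfConv_succ b (fun i => (hb (i + 1)).1)]
  obtain ⟨hl, hh⟩ := H m (by omega) (cfShift b) (fun i => hb (i + 1))
  have hc : 0 < cfConv (cfShift b) m := lt_of_lt_of_le hlo hl
  constructor
  · have := one_div_le_one_div_of_le hc hh
    linarith [(hb 0).1]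
  · have := one_div_le_one_div_of_le hlo hl
    linarith [(hb 0).2]

lemma cfConv_bounds6 : ∀ n, 6 ≤ n → ∀ b : ℕ → ℝ, (∀ i, 1 ≤ b i ∧ b i ≤ 3) →
    (115 / 91 : ℝ) ≤ cfConv b n ∧ cfConv b n ≤ 436 / 115 := by
  have B0 : ∀ n, 0 ≤ n → ∀ b : ℕ → ℝ, (∀ i, 1 ≤ b i ∧ b i ≤ 3) →
      (1 : ℝ) ≤ cfConv b n ∧ cfConv b n ≤ 4 := fun n _ b hb => cfConv_bounds0 n b hb
  have B1 := cfConv_bounds_step 0 1 4 (5/4) 4 (by norm_num) (by norm_num)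
    (by norm_num) (by norm_num) B0
  have B2 := cfConv_bounds_step 1 (5/4) 4 (5/4) (19/5) (by norm_num) (by norm_num)
    (by norm_num) (by norm_num) B1
  have B3 := cfConv_bounds_step 2 (5/4) (19/5) (24/19) (19/5) (by norm_num) (by norm_num)
    (by norm_num) (by norm_num) B2
  have B4 := cfConv_bounds_step 3 (24/19) (19/5) (24/19) (91/24) (by norm_num) (by norm_num)
    (by norm_num) (by norm_num) B3
  have B5 := cfConv_bounds_step 4 (24/19) (91/24) (115/91) (91/24) (by norm_num) (by norm_num)
    (by norm_num) (by norm_num) B4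
  have B6 := cfConv_bounds_step 5 (115/91) (91/24) (115/91) (436/115) (by norm_num) (by norm_num)
    (by norm_num) (by norm_num) B5
  exact B6

/-- For any bi-infinite sequence with digits in `{1,2,3}` and pattern `3* 1 2`, one has `λ₀ = [3; a₋₁, …] + [0; 1, 2, a₃, …] > 3.957`. -/
theorem stmt_14 (a : ℤ → ℕ) (hdig : ∀ i, 1 ≤ a i ∧ a i ≤ 3)
    (h0 : a 0 = 3) (h1 : a 1 = 1) (h2 : a 2 = 2)
    (ℓL ℓR : ℝ)
    (hL : IsCFVal (fun k => (a (-(k : ℤ)) : ℝ)) ℓL)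
    (hR : IsCFVal (fun k => if k = 0 then 0 else (a k : ℝ)) ℓR) :
    ℓL + ℓR > 3.957 := by
  set aL : ℕ → ℝ := fun k => (a (-(k : ℤ)) : ℝ) with haL
  set aR : ℕ → ℝ := fun k => if k = 0 then 0 else (a k : ℝ) with haR
  have hdigL : ∀ i : ℕ, 1 ≤ aL i ∧ aL i ≤ 3 := by
    intro i
    have := hdig (-(i : ℤ))
    constructor
    · show (1 : ℝ) ≤ ((a (-(i : ℤ)) : ℕ) : ℝ)
      exact_mod_cast this.1
    · show ((a (-(i : ℤ)) : ℕ) : ℝ) ≤ 3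
      exact_mod_cast this.2
  have haL0 : aL 0 = 3 := by
    simp only [haL, Nat.cast_zero, neg_zero, h0]
    norm_num
  -- Lower bound for ℓL
  have hLb : ∀ n : ℕ, 7 ≤ n → (3 + 115 / 436 : ℝ) ≤ cfConv aL n := by
    intro n hn
    obtain ⟨m, rfl⟩ : ∃ m, n = m + 1 := ⟨n - 1, by omega⟩
    rw [cfConv_succ aL (fun i => (hdigL (i + 1)).1)]
    obtain ⟨hl, hh⟩ := cfConv_bounds6 m (by omega) (cfShift aL) (fun i => hdigL (i + 1))
    have hc : 0 < cfConv (cfShift aL) m := by linarith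
    have := one_div_le_one_div_of_le hc hh
    rw [haL0]
    have h115 : (115 / 436 : ℝ) ≤ 1 / cfConv (cfShift aL) m := by
      calc (115 / 436 : ℝ) = 1 / (436 / 115) := by norm_num
        _ ≤ 1 / cfConv (cfShift aL) m := this
    linarith
  have hLge : (3 + 115 / 436 : ℝ) ≤ ℓL :=
    ge_of_tendsto hL (Filter.eventually_atTop.2 ⟨7, hLb⟩)
  -- Lower bound for ℓR
  have haR1 : ∀ i : ℕ, aR (i + 1) = (a ((i : ℤ) + 1) : ℝ) := by
    intro i
    show (if i + 1 = 0 then (0 : ℝ) else (a ((i + 1 : ℕ) : ℤ) : ℝ)) = _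
    rw [if_neg (Nat.succ_ne_zero i)]
    have : ((i + 1 : ℕ) : ℤ) = (i : ℤ) + 1 := by push_cast; ring
    rw [this]
  have hdigR1 : ∀ i : ℕ, 1 ≤ aR (i + 1) ∧ aR (i + 1) ≤ 3 := by
    intro i
    rw [haR1 i]
    have := hdig ((i : ℤ) + 1)
    exact ⟨by exact_mod_cast this.1, by exact_mod_cast this.2⟩
  have hRb : ∀ n : ℕ, 9 ≤ n → (987 / 1423 : ℝ) ≤ cfConv aR n := by
    intro n hn
    obtain ⟨m, rfl⟩ : ∃ m, n = m + 3 := ⟨n - 3, by omega⟩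
    have e1 : cfConv aR (m + 3) = aR 0 + 1 / cfConv (cfShift aR) (m + 2) :=
      cfConv_succ aR (fun i => (hdigR1 i).1) (m + 2)
    have hsh1 : ∀ i : ℕ, cfShift aR (i + 1) = aR (i + 2) := fun i => rfl
    have e2 : cfConv (cfShift aR) (m + 2) =
        cfShift aR 0 + 1 / cfConv (cfShift (cfShift aR)) (m + 1) := by
      apply cfConv_succ
      intro i
      rw [hsh1 i]
      exact (hdigR1 (i + 1)).1
    have e3 : cfConv (cfShift (cfShift aR)) (m + 1) =
        cfShift (cfShift aR) 0 + 1 / cfConv (cfShift (cfShift (cfShift aR))) m := by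
      apply cfConv_succ
      intro i
      show 1 ≤ aR (i + 3)
      exact (hdigR1 (i + 2)).1
    have hdig3 : ∀ i : ℕ, 1 ≤ cfShift (cfShift (cfShift aR)) i ∧
        cfShift (cfShift (cfShift aR)) i ≤ 3 := by
      intro i
      show 1 ≤ aR (i + 1 + 1 + 1) ∧ aR (i + 1 + 1 + 1) ≤ 3
      exact hdigR1 (i + 2)
    obtain ⟨hl, hh⟩ := cfConv_bounds6 m (by omega) _ hdig3
    set c := cfConv (cfShift (cfShift (cfShift aR))) m with hc
    have hc1 : (1 : ℝ) ≤ c := by linarith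
    have hc0 : (0 : ℝ) < c := by linarith
    have haR0 : aR 0 = 0 := by simp [haR]
    have hsh0 : cfShift aR 0 = 1 := by
      show aR 1 = 1
      have := haR1 0
      rw [this]
      norm_num
      exact_mod_cast h1
    have hsh00 : cfShift (cfShift aR) 0 = 2 := by
      show aR 2 = 2
      have := haR1 1
      rw [this]
      norm_num
      exact_mod_cast h2
    rw [e1, e2, e3, haR0, hsh0, hsh00]
    -- goal: 987/1423 ≤ 0 + 1 / (1 + 1 / (2 + 1 / c))
    have hd1 : (115 / 436 : ℝ) ≤ 1 / c := by
      have := one_div_le_one_div_of_le hc0 hh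
      calc (115 / 436 : ℝ) = 1 / (436 / 115) := by norm_num
        _ ≤ 1 / c := this
    have hd2 : (987 / 436 : ℝ) ≤ 2 + 1 / c := by linarith
    have hd3 : 1 / (2 + 1 / c) ≤ 436 / 987 := by
      have := one_div_le_one_div_of_le (by norm_num : (0:ℝ) < 987 / 436) hd2
      calc 1 / (2 + 1 / c) ≤ 1 / (987 / 436) := this
        _ = 436 / 987 := by norm_num
    have hd4 : (0 : ℝ) < 1 + 1 / (2 + 1 / c) := by
      have : (0:ℝ) < 1 / (2 + 1 / c) := by positivity
      linarith
    have hd5 : 1 + 1 / (2 + 1 / c) ≤ 1423 / 987 := by linarith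
    have := one_div_le_one_div_of_le hd4 hd5
    calc (987 / 1423 : ℝ) = 1 / (1423 / 987) := by norm_num
      _ ≤ 1 / (1 + 1 / (2 + 1 / c)) := this
      _ = 0 + 1 / (1 + 1 / (2 + 1 / c)) := by ring
  have hRge : (987 / 1423 : ℝ) ≤ ℓR :=
    ge_of_tendsto hR (Filter.eventually_atTop.2 ⟨9, hRb⟩)
  have : (3.957 : ℝ) < 3 + 115 / 436 + 987 / 1423 := by norm_num
  linarith
end

section
/- For any bi-infinite sequence (a_i) ∈ {1,2,3}^ℤ containing the pattern a_{−2}a_{−1}a_0a_1a_2 = 1 3 3* 1 1, one has λ₀((a_i)) = [3; 3, 1, a_{−3}, …] + [0; 1, 1, a_3, …] < 3.9228. -/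
lemma cfQ_pos (a : ℕ → ℝ) (h : ∀ k, 1 ≤ a (k+1)) :
    ∀ n, 0 < (cfQ a n).1 ∧ 0 ≤ (cfQ a n).2 := by
  intro n
  induction n with
  | zero => simp [cfQ]
  | succ n ih =>
    have := h n
    constructor
    · simp only [cfQ]; nlinarith [ih.1, ih.2]
    · simp only [cfQ]; exact ih.1.le

lemma cfP_pos (a : ℕ → ℝ) (h0 : 1 ≤ a 0) (h : ∀ k, 1 ≤ a (k+1)) :
    ∀ n, 0 < (cfP a n).1 ∧ 0 < (cfP a n).2 := by
  intro n
  induction n with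
  | zero =>
    constructor
    · simp only [cfP]; linarith
    · simp [cfP]
  | succ n ih =>
    have := h n
    constructor
    · simp only [cfP]; nlinarith [ih.1, ih.2]
    · simp only [cfP]; exact ih.1

lemma cfDet (a : ℕ → ℝ) :
    ∀ n, (cfP a n).1 * (cfQ a n).2 - (cfP a n).2 * (cfQ a n).1 = (-1)^(n+1) := by
  intro n
  induction n with
  | zero => simp [cfP, cfQ]
  | succ n ih =>
    simp only [cfP, cfQ]
    rw [pow_succ]
    linear_combination -ih

lemma cfQ_snd (a : ℕ → ℝ) (n : ℕ) : (cfQ a (n+1)).2 = (cfQ a n).1 := by simp [cfQ]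
lemma cfP_snd (a : ℕ → ℝ) (n : ℕ) : (cfP a (n+1)).2 = (cfP a n).1 := by simp [cfP]

lemma conv_succ_le (a : ℕ → ℝ) (h : ∀ k, 1 ≤ a (k+1)) {n : ℕ} (hn : Odd n) :
    cfConv a (n+1) ≤ cfConv a n := by
  have hd := cfDet a (n+1)
  rw [cfQ_snd, cfP_snd] at hd
  have hpow : ((-1 : ℝ))^(n+1+1) = -1 :=
    Odd.neg_one_pow (by rcases hn with ⟨j, hj⟩; exact ⟨j + 1, by omega⟩)
  rw [hpow] at hd
  have q1 := (cfQ_pos a h n).1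
  have q2 := (cfQ_pos a h (n+1)).1
  rw [cfConv, cfConv, div_le_div_iff₀ q2 q1]
  nlinarith

lemma conv_two_le (a : ℕ → ℝ) (h : ∀ k, 1 ≤ a (k+1)) {n : ℕ} (hn : Odd n) :
    cfConv a (n+2) ≤ cfConv a n := by
  have hd := cfDet a (n+1)
  rw [cfQ_snd, cfP_snd] at hd
  have hpow : ((-1 : ℝ))^(n+1+1) = -1 :=
    Odd.neg_one_pow (by rcases hn with ⟨j, hj⟩; exact ⟨j + 1, by omega⟩)
  rw [hpow] at hd
  have q1 := (cfQ_pos a h n).1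
  have q2 := (cfQ_pos a h (n+1)).1
  have q3 := (cfQ_pos a h (n+2)).1
  have ha : 1 ≤ a (n+2) := h (n+1)
  have hp3 : (cfP a (n+2)).1 = a (n+2) * (cfP a (n+1)).1 + (cfP a n).1 := by
    simp [cfP]
  have hq3 : (cfQ a (n+2)).1 = a (n+2) * (cfQ a (n+1)).1 + (cfQ a n).1 := by
    simp [cfQ]
  rw [cfConv, cfConv, div_le_div_iff₀ q3 q1, hp3, hq3]
  nlinarith

lemma conv_le_odd (a : ℕ → ℝ) (h : ∀ k, 1 ≤ a (k+1)) {N : ℕ} (hN : Odd N) :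
    ∀ m, N ≤ m → cfConv a m ≤ cfConv a N := by
  intro m
  induction m using Nat.strong_induction_on with
  | _ m ih =>
    intro hm
    rcases eq_or_lt_of_le hm with rfl | hlt
    · exact le_rfl
    rcases Nat.even_or_odd m with he | ho
    · obtain ⟨m', rfl⟩ : ∃ m', m = m' + 1 := ⟨m - 1, by omega⟩
      have hm' : Odd m' := by
        rcases he with ⟨j, hj⟩; exact ⟨j - 1, by omega⟩
      exact (conv_succ_le a h hm').trans (ih m' (by omega) (by
        rcases hm' with ⟨j, hj⟩; rcases hN with ⟨i, hi⟩; omega))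
    · obtain ⟨m', rfl⟩ : ∃ m', m = m' + 2 := by
        rcases ho with ⟨j, hj⟩; rcases hN with ⟨i, hi⟩; exact ⟨m - 2, by omega⟩
      have hm' : Odd m' := by rcases ho with ⟨j, hj⟩; exact ⟨j - 1, by omega⟩
      refine (conv_two_le a h hm').trans (ih m' (by omega) ?_)
      rcases hN with ⟨i, hi⟩; rcases hm' with ⟨j, hj⟩; omega

lemma cf_shift_aux (a : ℕ → ℝ) : ∀ n,
    (cfP a (n+1)).1 = a 0 * (cfP (fun k => a (k+1)) n).1 + (cfQ (fun k => a (k+1)) n).1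
    ∧ (cfQ a (n+1)).1 = (cfP (fun k => a (k+1)) n).1
    ∧ (cfP a (n+1)).2 = a 0 * (cfP (fun k => a (k+1)) n).2 + (cfQ (fun k => a (k+1)) n).2
    ∧ (cfQ a (n+1)).2 = (cfP (fun k => a (k+1)) n).2 := by
  intro n
  induction n with
  | zero => simp only [cfP, cfQ]; refine ⟨by ring, by ring, by ring, by simp [cfP, cfQ]⟩
  | succ n ih =>
    obtain ⟨e1, e2, e3, e4⟩ := ih
    simp only [cfP, cfQ] at *
    refine ⟨?_, ?_, ?_, ?_⟩
    · rw [e1, e3]; ring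
    · rw [e2, e4]
    · exact e1
    · exact e2

lemma conv_shift (a : ℕ → ℝ) (h : ∀ k, 1 ≤ a (k+1)) (n : ℕ) :
    cfConv a (n+1) = a 0 + 1 / cfConv (fun k => a (k+1)) n := by
  obtain ⟨e1, e2, _, _⟩ := cf_shift_aux a n
  have hP := (cfP_pos (fun k => a (k+1)) (h 0) (fun k => h (k+1)) n).1
  have hQ := (cfQ_pos (fun k => a (k+1)) (fun k => h (k+1)) n).1
  rw [cfConv, cfConv, e1, e2]
  field_simp

/-- digits all in `[1,3]` -/
def Dig (a : ℕ → ℝ) : Prop := ∀ k, 1 ≤ a k ∧ a k ≤ 3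

lemma conv_bound0 : ∀ (a : ℕ → ℝ), Dig a → ∀ n, 1 ≤ cfConv a n ∧ cfConv a n ≤ 4 := by
  intro a h n
  induction n generalizing a with
  | zero =>
    have := h 0
    constructor <;> simp only [cfConv, cfP, cfQ] <;> simp <;> linarith [this.1, this.2]
  | succ n ih =>
    have h' : ∀ k, 1 ≤ a (k+1) := fun k => (h (k+1)).1
    rw [conv_shift a h' n]
    obtain ⟨l, u⟩ := ih (fun k => a (k+1)) (fun k => h (k+1))
    have hc : (0:ℝ) < cfConv (fun k => a (k+1)) n := by linarith
    have h1 : 1 / cfConv (fun k => a (k+1)) n ≤ 1 := by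
      rw [div_le_one hc]; linarith
    have h2 : 0 < 1 / cfConv (fun k => a (k+1)) n := by positivity
    have := h 0
    constructor <;> linarith [this.1, this.2]

lemma conv_step (m M : ℝ) (hm : 0 < m) (hM : 0 < M) (j : ℕ)
    (H : ∀ (a : ℕ → ℝ), Dig a → ∀ n, j ≤ n → m ≤ cfConv a n ∧ cfConv a n ≤ M) :
    ∀ (a : ℕ → ℝ), Dig a → ∀ n, j + 1 ≤ n →
      1 + 1/M ≤ cfConv a n ∧ cfConv a n ≤ 3 + 1/m := by
  intro a h n hn
  obtain ⟨n, rfl⟩ : ∃ n', n = n' + 1 := ⟨n - 1, by omega⟩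
  have h' : ∀ k, 1 ≤ a (k+1) := fun k => (h (k+1)).1
  rw [conv_shift a h' n]
  obtain ⟨l, u⟩ := H (fun k => a (k+1)) (fun k => h (k+1)) n (by omega)
  have hc : (0:ℝ) < cfConv (fun k => a (k+1)) n := lt_of_lt_of_le hm l
  have h1 : 1 / cfConv (fun k => a (k+1)) n ≤ 1/m := by
    apply one_div_le_one_div_of_le hm l
  have h2 : 1/M ≤ 1 / cfConv (fun k => a (k+1)) n := by
    apply one_div_le_one_div_of_le hc u
  have := h 0
  constructor <;> linarith [this.1, this.2]

lemma conv_deep (a : ℕ → ℝ) (h : Dig a) {n : ℕ} (hn : 5 ≤ n) :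
    115/91 ≤ cfConv a n ∧ cfConv a n ≤ 91/24 := by
  have B1 := conv_step 1 4 (by norm_num) (by norm_num) 0
    (fun a h n _ => conv_bound0 a h n)
  have B2 := conv_step (1 + 1/4) (3 + 1/1) (by norm_num) (by norm_num) 1 B1
  have B3 := conv_step (1 + 1/(3 + 1/1)) (3 + 1/(1 + 1/4)) (by norm_num) (by norm_num) 2 B2
  have B4 := conv_step (1 + 1/(3 + 1/(1 + 1/4))) (3 + 1/(1 + 1/(3 + 1/1)))
    (by norm_num) (by norm_num) 3 B3
  have B5 := conv_step (1 + 1/(3 + 1/(1 + 1/(3 + 1/1)))) (3 + 1/(1 + 1/(3 + 1/(1 + 1/4))))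
    (by norm_num) (by norm_num) 4 B4
  obtain ⟨l, u⟩ := B5 a h n (by omega)
  constructor <;> [linarith [show (115:ℝ)/91 ≤ 1 + 1/(3 + 1/(1 + 1/(3 + 1/(1 + 1/4)))) by norm_num];
    linarith [show (3:ℝ) + 1/(1 + 1/(3 + 1/(1 + 1/(3 + 1/1)))) ≤ 91/24 by norm_num]]


/-- For any bi-infinite sequence with digits in `{1,2,3}` containing the pattern `1 3 3* 1 1`, one has `λ₀ = [3; 3, 1, a₋₃, …] + [0; 1, 1, a₃, …] < 3.9228`. -/
theorem stmt_15 (a : ℤ → ℕ) (hdig : ∀ i, 1 ≤ a i ∧ a i ≤ 3)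
    (hm2 : a (-2) = 1) (hm1 : a (-1) = 3) (h0 : a 0 = 3) (h1 : a 1 = 1) (h2 : a 2 = 1)
    (ℓL ℓR : ℝ)
    (hL : IsCFVal (fun k => (a (-(k : ℤ)) : ℝ)) ℓL)
    (hR : IsCFVal (fun k => if k = 0 then 0 else (a k : ℝ)) ℓR) :
    ℓL + ℓR < 3.9228 := by
  -- generic digit facts
  have hd1 : ∀ i : ℤ, (1:ℝ) ≤ (a i : ℝ) := fun i => by exact_mod_cast (hdig i).1
  have hd3 : ∀ i : ℤ, (a i : ℝ) ≤ 3 := fun i => by exact_mod_cast (hdig i).2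
  -- LEFT side
  set aL : ℕ → ℝ := fun k => (a (-(k : ℤ)) : ℝ) with haL
  have hLd : Dig aL := fun k => ⟨hd1 _, hd3 _⟩
  have hL1 : ∀ k, 1 ≤ aL (k+1) := fun k => (hLd (k+1)).1
  have hLle : ℓL ≤ cfConv aL 9 := by
    refine le_of_tendsto hL (Filter.eventually_atTop.2 ⟨9, fun m hm => ?_⟩)
    exact conv_le_odd aL hL1 (by decide) m hm
  have eL1 : cfConv aL 9 = aL 0 + 1 / cfConv (fun k => aL (k+1)) 8 :=
    conv_shift aL hL1 8
  have eL2 : cfConv (fun k => aL (k+1)) 8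
      = aL 1 + 1 / cfConv (fun k => aL (k+2)) 7 := by
    have := conv_shift (fun k => aL (k+1)) (fun k => hL1 (k+1)) 7
    simpa using this
  have eL3 : cfConv (fun k => aL (k+2)) 7
      = aL 2 + 1 / cfConv (fun k => aL (k+3)) 6 := by
    have := conv_shift (fun k => aL (k+2)) (fun k => hL1 (k+2)) 6
    simpa [add_assoc] using this
  have hLt : Dig (fun k => aL (k+3)) := fun k => hLd (k+3)
  obtain ⟨tLl, tLu⟩ := conv_deep (fun k => aL (k+3)) hLt (by norm_num : 5 ≤ 6)
  set t : ℝ := cfConv (fun k => aL (k+3)) 6 with ht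
  -- values of known digits
  have vL0 : aL 0 = 3 := by simp [haL, h0]
  have vL1 : aL 1 = 3 := by simp [haL]; norm_num [hm1]
  have vL2 : aL 2 = 1 := by simp [haL]; norm_num [hm2]
  have htpos : (0:ℝ) < t := by linarith
  have hLbound : cfConv aL 9 ≤ 3 + 206/733 := by
    rw [eL1, eL2, eL3, vL0, vL1, vL2]
    have s1 : 1/t ≤ 91/115 := by
      calc 1/t ≤ 1/(115/91) := one_div_le_one_div_of_le (by norm_num) tLl
      _ = 91/115 := by norm_num
    have s1' : (0:ℝ) < 1/t := by positivity
    have s2 : (115:ℝ)/206 ≤ 1/(1 + 1/t) := by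
      calc (115:ℝ)/206 = 1/(206/115) := by norm_num
      _ ≤ 1/(1 + 1/t) := one_div_le_one_div_of_le (by linarith) (by linarith)
    have s2' : (0:ℝ) < 1/(1 + 1/t) := by positivity
    have s3 : 1/(3 + 1/(1 + 1/t)) ≤ 206/733 := by
      calc 1/(3 + 1/(1 + 1/t)) ≤ 1/(733/206) :=
        one_div_le_one_div_of_le (by norm_num) (by linarith)
      _ = 206/733 := by norm_num
    linarith
  -- RIGHT side
  set bR : ℕ → ℝ := fun k => if k = 0 then 0 else (a k : ℝ) with hbR
  have hR1 : ∀ k, 1 ≤ bR (k+1) := by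
    intro k; simp only [hbR]; rw [if_neg (by omega)]; exact hd1 _
  have hRle : ℓR ≤ cfConv bR 9 := by
    refine le_of_tendsto hR (Filter.eventually_atTop.2 ⟨9, fun m hm => ?_⟩)
    exact conv_le_odd bR hR1 (by decide) m hm
  have eR1 : cfConv bR 9 = bR 0 + 1 / cfConv (fun k => bR (k+1)) 8 :=
    conv_shift bR hR1 8
  have eR2 : cfConv (fun k => bR (k+1)) 8
      = bR 1 + 1 / cfConv (fun k => bR (k+2)) 7 := by
    have := conv_shift (fun k => bR (k+1)) (fun k => hR1 (k+1)) 7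
    simpa using this
  have eR3 : cfConv (fun k => bR (k+2)) 7
      = bR 2 + 1 / cfConv (fun k => bR (k+3)) 6 := by
    have := conv_shift (fun k => bR (k+2)) (fun k => hR1 (k+2)) 6
    simpa [add_assoc] using this
  have hRt : Dig (fun k => bR (k+3)) := by
    intro k
    constructor
    · exact hR1 (k+2)
    · simp only [hbR]; rw [if_neg (by omega)]; exact hd3 _
  obtain ⟨sLl, sLu⟩ := conv_deep (fun k => bR (k+3)) hRt (by norm_num : 5 ≤ 6)
  set s : ℝ := cfConv (fun k => bR (k+3)) 6 with hs
  have vR0 : bR 0 = 0 := by simp [hbR]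
  have vR1 : bR 1 = 1 := by simp [hbR]; norm_num [h1]
  have vR2 : bR 2 = 1 := by simp [hbR]; norm_num [h2]
  have hspos : (0:ℝ) < s := by linarith
  have hRbound : cfConv bR 9 ≤ 206/321 := by
    rw [eR1, eR2, eR3, vR0, vR1, vR2]
    have s1 : 1/s ≤ 91/115 := by
      calc 1/s ≤ 1/(115/91) := one_div_le_one_div_of_le (by norm_num) sLl
      _ = 91/115 := by norm_num
    have s1' : (0:ℝ) < 1/s := by positivity
    have s2 : (115:ℝ)/206 ≤ 1/(1 + 1/s) := by
      calc (115:ℝ)/206 = 1/(206/115) := by norm_num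
      _ ≤ 1/(1 + 1/s) := one_div_le_one_div_of_le (by linarith) (by linarith)
    have s2' : (0:ℝ) < 1/(1 + 1/s) := by positivity
    have s3 : 1/(1 + 1/(1 + 1/s)) ≤ 206/321 := by
      calc 1/(1 + 1/(1 + 1/s)) ≤ 1/(321/206) :=
        one_div_le_one_div_of_le (by norm_num) (by linarith)
      _ = 206/321 := by norm_num
    linarith
  have : ℓL + ℓR ≤ (3 + 206/733) + 206/321 := by linarith
  calc ℓL + ℓR ≤ (3 + 206/733) + 206/321 := this
  _ < 3.9228 := by norm_num
end
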